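/- arXiv:1310.8249 — 2 statements merged into one kernel-verified Lean document; each statement's English description precedes it below -/
import Mathlib

section
/- Let P = x^3·y + x^2·p2(y) + x·p1(y) + p0(y) and Q = x^2·y + x·q1(y) + q0(y) with p0,p1,p2,q0,q1 ∈ K[y]. Then [P,Q] = x^4·y + μ0 + μ1·x + μ2·x^2 + μ3·x^3 holds for constants μ0,μ1,μ2,μ3 ∈ K if and only if the following system of differential equations holds: (1) μ3 = 3y·q1' − q1 + 2p2 − 2y·p2'; (2) μ2 = 3y·q0' + 2p2·q1' − p2'·q1 + p1 − 2y·p1'; (3) μ1 = 2p2·q0' + p1·q1' − p1'·q1 − 2y·p0'; (4) μ0 = p1·q0' − p0'·q1. -/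
open MvPolynomial Polynomial

/-- The Jacobian bracket on K[x,y]. -/
noncomputable def jbr {K : Type*} [CommRing K] (P Q : MvPolynomial (Fin 2) K) :
    MvPolynomial (Fin 2) K :=
  pderiv 0 P * pderiv 1 Q - pderiv 1 P * pderiv 0 Q

/-- Embedding of K[y] into K[x,y]. -/
noncomputable def py {K : Type*} [CommRing K] (p : Polynomial K) : MvPolynomial (Fin 2) K :=
  Polynomial.aeval (MvPolynomial.X 1) p

lemma pderiv0_py {K : Type*} [CommRing K] (p : Polynomial K) : pderiv 0 (py p) = 0 := by
  induction p using Polynomial.induction_on with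
  | C a => simp [py]
  | add p q hp hq => simp [py, map_add] at hp hq ⊢
  | monomial n a h => simp [py, map_mul, map_pow] at h ⊢

lemma pderiv1_py {K : Type*} [CommRing K] (p : Polynomial K) :
    pderiv 1 (py p) = py (derivative p) := by
  induction p using Polynomial.induction_on with
  | C a => simp [py]
  | add p q hp hq => simp [py, map_add] at hp hq ⊢
  | monomial n a h =>
      simp [py, map_mul, map_pow, derivative_mul] at h ⊢


lemma jbr_eq {K : Type*} [Field K] [CharZero K]
    (p0 p1 p2 q0 q1 : Polynomial K)
    (P Q : MvPolynomial (Fin 2) K)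
    (hP : P = X 0 ^ 3 * X 1 + X 0 ^ 2 * py p2 + X 0 * py p1 + py p0)
    (hQ : Q = X 0 ^ 2 * X 1 + X 0 * py q1 + py q0) :
    jbr P Q = X 0 ^ 4 * X 1
      + py (p1 * derivative q0 - derivative p0 * q1)
      + py (2 * p2 * derivative q0 + p1 * derivative q1 - derivative p1 * q1
              - 2 * Polynomial.X * derivative p0) * X 0
      + py (3 * Polynomial.X * derivative q0 + 2 * p2 * derivative q1 - derivative p2 * q1
              + p1 - 2 * Polynomial.X * derivative p1) * X 0 ^ 2
      + py (3 * Polynomial.X * derivative q1 - q1 + 2 * p2 - 2 * Polynomial.X * derivative p2)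
          * X 0 ^ 3 := by
  subst hP hQ
  simp only [jbr, map_add, pderiv_mul, pderiv_pow, pderiv0_py, pderiv1_py,
    pderiv_X_self, pderiv_X_of_ne (by decide : (1:Fin 2) ≠ 0),
    pderiv_X_of_ne (by decide : (0:Fin 2) ≠ 1)]
  simp only [py, map_add, map_mul, map_sub, map_ofNat, Polynomial.aeval_X, Polynomial.aeval_C]
  ring

noncomputable def phi (K : Type*) [CommRing K] :
    MvPolynomial (Fin 2) K →ₐ[K] Polynomial (Polynomial K) :=
  MvPolynomial.aeval ![Polynomial.X, Polynomial.C Polynomial.X]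

noncomputable def psi (K : Type*) [CommRing K] :
    Polynomial (Polynomial K) →ₐ[K] MvPolynomial (Fin 2) K :=
  Polynomial.aevalTower (Polynomial.aeval (X 1)) (X 0)

lemma phi_inj (K : Type*) [CommRing K] : Function.Injective (phi K) := by
  have h : (psi K).comp (phi K) = AlgHom.id K _ := by
    apply MvPolynomial.algHom_ext
    intro i
    fin_cases i <;>
      simp [phi, psi, Polynomial.aevalTower_X, Polynomial.aevalTower_C]
  intro a b hab
  have := congrArg (psi K) hab
  calc a = (psi K).comp (phi K) a := by rw [h]; rfl
    _ = (psi K).comp (phi K) b := this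
    _ = b := by rw [h]; rfl

lemma phi_py {K : Type*} [CommRing K] (p : Polynomial K) :
    phi K (py p) = Polynomial.C p := by
  have h1 : phi K (py p) = Polynomial.aeval ((phi K) (X 1)) p := by
    rw [py, ← Polynomial.aeval_algHom_apply]
  have h2 : (phi K) (X 1) = Polynomial.CAlgHom (R := K) Polynomial.X := by simp [phi]
  rw [h1, h2, Polynomial.aeval_algHom_apply, Polynomial.aeval_X_left_apply]
  rfl

lemma py_C {K : Type*} [CommRing K] (a : K) : py (Polynomial.C a) = MvPolynomial.C a := by
  simp [py]

lemma coeff_cmp {R : Type*} [CommRing R] (a0 a1 a2 a3 b0 b1 b2 b3 : R)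
    (h : (Polynomial.C a0 + Polynomial.C a1 * Polynomial.X + Polynomial.C a2 * Polynomial.X ^ 2
        + Polynomial.C a3 * Polynomial.X ^ 3 : R[X])
      = Polynomial.C b0 + Polynomial.C b1 * Polynomial.X + Polynomial.C b2 * Polynomial.X ^ 2
        + Polynomial.C b3 * Polynomial.X ^ 3) :
    a0 = b0 ∧ a1 = b1 ∧ a2 = b2 ∧ a3 = b3 := by
  refine ⟨?_, ?_, ?_, ?_⟩
  · simpa using congrArg (Polynomial.coeff · 0) h
  · simpa using congrArg (Polynomial.coeff · 1) h
  · simpa using congrArg (Polynomial.coeff · 2) h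
  · simpa using congrArg (Polynomial.coeff · 3) h

theorem stmt3 {K : Type*} [Field K] [CharZero K]
    (p0 p1 p2 q0 q1 : Polynomial K) (μ0 μ1 μ2 μ3 : K)
    (P Q : MvPolynomial (Fin 2) K)
    (hP : P = X 0 ^ 3 * X 1 + X 0 ^ 2 * py p2 + X 0 * py p1 + py p0)
    (hQ : Q = X 0 ^ 2 * X 1 + X 0 * py q1 + py q0) :
    jbr P Q = X 0 ^ 4 * X 1 + MvPolynomial.C μ0 + MvPolynomial.C μ1 * X 0
        + MvPolynomial.C μ2 * X 0 ^ 2 + MvPolynomial.C μ3 * X 0 ^ 3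
      ↔ (Polynomial.C μ3
            = 3 * Polynomial.X * derivative q1 - q1 + 2 * p2 - 2 * Polynomial.X * derivative p2
        ∧ Polynomial.C μ2
            = 3 * Polynomial.X * derivative q0 + 2 * p2 * derivative q1 - derivative p2 * q1
              + p1 - 2 * Polynomial.X * derivative p1
        ∧ Polynomial.C μ1
            = 2 * p2 * derivative q0 + p1 * derivative q1 - derivative p1 * q1
              - 2 * Polynomial.X * derivative p0
        ∧ Polynomial.C μ0 = p1 * derivative q0 - derivative p0 * q1) := by
  rw [jbr_eq p0 p1 p2 q0 q1 P Q hP hQ]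
  constructor
  · intro h
    have h' := congrArg (phi K) h
    simp only [map_add, map_mul, map_pow, phi_py] at h'
    have hx0 : phi K (X 0) = Polynomial.X := by simp [phi]
    have hx1 : phi K (X 1) = Polynomial.C Polynomial.X := by simp [phi]
    have hc : ∀ a : K, phi K (MvPolynomial.C a) = Polynomial.C (Polynomial.C a) := by
      intro a; simp [phi, MvPolynomial.algHom_C]
    rw [hx0, hx1, hc, hc, hc, hc] at h'
    have h'' : (Polynomial.C (p1 * derivative q0 - derivative p0 * q1)
        + Polynomial.C (2 * p2 * derivative q0 + p1 * derivative q1 - derivative p1 * q1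
              - 2 * Polynomial.X * derivative p0) * Polynomial.X
        + Polynomial.C (3 * Polynomial.X * derivative q0 + 2 * p2 * derivative q1
              - derivative p2 * q1 + p1 - 2 * Polynomial.X * derivative p1) * Polynomial.X ^ 2
        + Polynomial.C (3 * Polynomial.X * derivative q1 - q1 + 2 * p2
              - 2 * Polynomial.X * derivative p2) * Polynomial.X ^ 3 : (Polynomial K)[X])
      = Polynomial.C (Polynomial.C μ0) + Polynomial.C (Polynomial.C μ1) * Polynomial.X
        + Polynomial.C (Polynomial.C μ2) * Polynomial.X ^ 2
        + Polynomial.C (Polynomial.C μ3) * Polynomial.X ^ 3 := by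
      linear_combination h'
    obtain ⟨e0, e1, e2, e3⟩ := coeff_cmp _ _ _ _ _ _ _ _ h''
    exact ⟨e3.symm, e2.symm, e1.symm, e0.symm⟩
  · rintro ⟨h3, h2, h1, h0⟩
    rw [← h0, ← h1, ← h2, ← h3, py_C, py_C, py_C, py_C]
end

section
/- Let μ3 ∈ K and let q1, p2 ∈ K[y] satisfy q1(0) = μ3, q1'(0) = 0, p2(0) = μ3, p2'(0) = 0, and μ3 = 3y·q1' − q1 + 2p2 − 2y·p2'. Then there exists F ∈ K[y] with F(0) = 0 such that q1 = μ3 + y^2·F' and p2 = μ3 + y·F + (3/2)·y^2·F'. -/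
open Polynomial

theorem stmt4 {K : Type*} [Field K] [CharZero K] (μ3 : K) (q1 p2 : Polynomial K)
    (hq10 : q1.eval 0 = μ3) (hq1'0 : (derivative q1).eval 0 = 0)
    (hp20 : p2.eval 0 = μ3) (hp2'0 : (derivative p2).eval 0 = 0)
    (heq : C μ3 = 3 * X * derivative q1 - q1 + 2 * p2 - 2 * X * derivative p2) :
    ∃ F : Polynomial K, F.eval 0 = 0
      ∧ q1 = C μ3 + X ^ 2 * derivative F
      ∧ p2 = C μ3 + X * F + C ((3 : K) / 2) * X ^ 2 * derivative F := by
  have hdvd : X ∣ (2 * p2 - 3 * q1 + C μ3) := by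
    rw [X_dvd_iff, coeff_zero_eq_eval_zero]
    simp [hp20, hq10]
    ring
  obtain ⟨G, hG⟩ := hdvd
  have hG' : 2 * derivative p2 - 3 * derivative q1 = G + X * derivative G := by
    have := congrArg derivative hG
    simp only [derivative_sub, derivative_add, derivative_mul, derivative_C,
      derivative_X, derivative_ofNat] at this
    linear_combination this
  have hG0 : G.eval 0 = 0 := by
    have := congrArg (eval 0) hG'
    simpa [hq1'0, hp2'0] using this.symm
  have two : (2 : Polynomial K) * C ((2:K))⁻¹ = 1 := by
    rw [← map_ofNat (C : K →+* Polynomial K) 2, ← map_mul]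
    norm_num
  have hc : C ((3:K)/2) = 3 * C ((2:K))⁻¹ := by
    rw [show (3:K)/2 = 3 * 2⁻¹ by ring, map_mul, map_ofNat]
  have h2 : 2 * q1 = 2 * C μ3 + X ^ 2 * derivative G := by
    linear_combination X * hG' - hG - heq
  refine ⟨C ((2:K))⁻¹ * G, by simp [hG0], ?_, ?_⟩
  · rw [derivative_C_mul]
    linear_combination C ((2:K))⁻¹ * h2 - (q1 - C μ3) * two
  · rw [derivative_C_mul, hc]
    linear_combination C ((2:K))⁻¹ * hG + 3 * C ((2:K))⁻¹^2 * h2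
      - ((p2 - C μ3) + 3 * C ((2:K))⁻¹ * (q1 - C μ3)) * two
end
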